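/- The number of k-omni binary strings of length n (n ≥ 2k) is N(n,k,2) = sum_{t=2k}^{n} C(t-k-1, k-1) 2^{n+k-t}, and consequently the probability that a uniformly random binary string of length n is k-omni is P(n,k,2) = 2^{-k} sum_{t=0}^{n-2k} C(t+k-1, k-1) 2^{-t}. -/

import Mathlib

open Finset
open scoped Classical

def uu : List (Fin 2) → ℕ
  | [] => 0
  | [_] => 0
  | a :: b :: s => if a = b then uu (a :: s) else uu s + 1
termination_by l => l.length

theorem uu_nil : uu [] = 0 := by rw [uu]
theorem uu_single (a : Fin 2) : uu [a] = 0 := by rw [uu]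
theorem uu_cons_cons (a b : Fin 2) (s : List (Fin 2)) :
    uu (a :: b :: s) = if a = b then uu (a :: s) else uu s + 1 := by
  rw [uu]

theorem L1 (s : List (Fin 2)) : ∀ (T : List (Fin 2)), T.length ≤ uu s → T.Sublist s := by
  induction s using uu.induct with
  | case1 => intro T hT; simp [uu_nil] at hT; simp [hT]
  | case2 a => intro T hT; simp [uu_single] at hT; simp [hT]
  | case3 b s ih =>
    intro T hT
    rw [uu_cons_cons, if_pos rfl] at hT
    exact (ih T hT).trans ((List.sublist_cons_self b s).cons_cons b)
  | case4 a b s hab ih =>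
    intro T hT
    rw [uu_cons_cons, if_neg hab] at hT
    match T with
    | [] => simp
    | c :: T' =>
      have h' : T'.length ≤ uu s := by simpa using hT
      have hTs := ih T' h'
      have hc : [c].Sublist [a, b] := by
        have : c = a ∨ c = b := by fin_cases a <;> fin_cases b <;> fin_cases c <;> simp_all
        rcases this with h | h <;> simp [h]
      have := List.Sublist.append hc hTs
      simpa using this

theorem sublist_of_cons_of_ne {c x : Fin 2} {t r : List (Fin 2)} (h : (c :: t).Sublist (x :: r))
    (hcx : c ≠ x) : (c :: t).Sublist r := by
  rcases List.sublist_cons_iff.mp h with h' | ⟨t', ht', h''⟩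
  · exact h'
  · exact absurd (by rw [ht']) (by simp [hcx] : ¬(c :: t = x :: t'))

theorem L2 (s : List (Fin 2)) :
    ∃ T : List (Fin 2), T.length = uu s + 1 ∧ ¬ T.Sublist s ∧
      ∀ a : Fin 2, s.head? = some a → T.head? = some (a + 1) := by
  induction s using uu.induct with
  | case1 => exact ⟨[0], by simp [uu_nil], by simp, by simp⟩
  | case2 a =>
    refine ⟨[a + 1], by simp [uu_single], ?_, by simp⟩
    have : a + 1 ≠ a := by fin_cases a <;> decide
    simp [this]
  | case3 b s ih =>
    obtain ⟨T, hlen, hns, hhead⟩ := ih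
    refine ⟨T, by rw [uu_cons_cons, if_pos rfl]; exact hlen, ?_, ?_⟩
    · intro hsub
      match T, hhead b rfl with
      | c :: T', hc =>
        have hcb : c ≠ b := by
          simp at hc; subst hc; fin_cases b <;> decide
        exact hns (sublist_of_cons_of_ne hsub hcb)
    · intro x hx
      simp at hx; subst hx; exact hhead b rfl
  | case4 a b s hab ih =>
    obtain ⟨T, hlen, hns, _⟩ := ih
    have hba : b = a + 1 := by fin_cases a <;> fin_cases b <;> simp_all <;> decide
    refine ⟨b :: T, ?_, ?_, by simp [hba]⟩
    · rw [uu_cons_cons, if_neg hab]; simp [hlen]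
    · intro hsub
      have h1 : (b :: T).Sublist (b :: s) := sublist_of_cons_of_ne hsub (Ne.symm hab)
      exact hns (List.cons_sublist_cons.mp h1)

theorem omni_iff (k : ℕ) (s : List (Fin 2)) :
    (∀ T : List (Fin 2), T.length = k → T.Sublist s) ↔ k ≤ uu s := by
  constructor
  · intro h
    by_contra hlt
    push_neg at hlt
    obtain ⟨T, hlen, hns, _⟩ := L2 s
    have hTk : T.length ≤ k := by omega
    have := h (T ++ List.replicate (k - T.length) 0) (by simp; omega)
    exact hns (((List.sublist_append_left T _)).trans this)
  · intro h T hT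
    exact L1 s T (by omega)

theorem card_split (n : ℕ) (P : List (Fin 2) → Prop) [DecidablePred P] :
    (univ.filter fun f : Fin (n+1) → Fin 2 => P (List.ofFn f)).card
      = ∑ b : Fin 2, (univ.filter fun g : Fin n → Fin 2 => P (b :: List.ofFn g)).card := by
  rw [← Fintype.card_subtype]
  have e1 : {f : Fin (n+1) → Fin 2 // P (List.ofFn f)}
      ≃ {p : Fin 2 × (Fin n → Fin 2) // P (p.1 :: List.ofFn p.2)} := by
    refine ((Fin.consEquiv fun _ => Fin 2).subtypeEquiv fun p => ?_).symm
    have : List.ofFn (Fin.cons p.1 p.2 : Fin (n+1) → Fin 2) = p.1 :: List.ofFn p.2 := by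
      rw [List.ofFn_succ]; simp [Fin.cons_succ]
    simp [Fin.consEquiv, this]
  rw [Fintype.card_congr e1,
    Fintype.card_congr (Equiv.subtypeProdEquivSigmaSubtype fun a b => P (a :: List.ofFn b))]
  simp [Fintype.card_subtype]

noncomputable def AA (k n : ℕ) : ℕ :=
  (univ.filter fun f : Fin n → Fin 2 => k ≤ uu (List.ofFn f)).card

noncomputable def BB (a : Fin 2) (k n : ℕ) : ℕ :=
  (univ.filter fun f : Fin n → Fin 2 => k ≤ uu (a :: List.ofFn f)).card

theorem uu_map_flip (s : List (Fin 2)) : uu (s.map (· + 1)) = uu s := by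
  induction s using uu.induct with
  | case1 => simp
  | case2 a => simp [uu_single]
  | case3 b s ih =>
    simpa [uu_cons_cons] using ih
  | case4 a b s hab ih =>
    have h1 : a + 1 ≠ b + 1 := fun h => hab (by fin_cases a <;> fin_cases b <;> simp_all)
    simp only [List.map_cons, uu_cons_cons, if_neg hab, if_neg h1]
    simpa using ih

theorem flip_invol (a : Fin 2) : a + 1 + 1 = a := by fin_cases a <;> decide

theorem BB_flip (a : Fin 2) (k n : ℕ) : BB (a + 1) k n = BB a k n := by
  unfold BB
  apply Finset.card_bij' (fun g _ => fun i => g i + 1) (fun g _ => fun i => g i + 1)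
  case hi =>
    intro g hg
    simp only [mem_filter, mem_univ, true_and] at hg ⊢
    have : (a :: List.ofFn fun i => g i + 1) = ((a + 1) :: List.ofFn g).map (· + 1) := by
      simp [List.map_ofFn, flip_invol]; rfl
    rwa [this, uu_map_flip]
  case hj =>
    intro g hg
    simp only [mem_filter, mem_univ, true_and] at hg ⊢
    have : ((a + 1) :: List.ofFn fun i => g i + 1) = (a :: List.ofFn g).map (· + 1) := by
      simp [List.map_ofFn]; rfl
    rwa [this, uu_map_flip]
  case left_inv => intro g _; funext i; exact flip_invol _
  case right_inv => intro g _; funext i; exact flip_invol _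

theorem AA_zero (n : ℕ) : AA 0 n = 2 ^ n := by
  simp [AA]

theorem AA_nil (k : ℕ) (hk : 1 ≤ k) : AA k 0 = 0 := by
  simp only [AA]
  rw [Finset.card_eq_zero, Finset.filter_eq_empty_iff]
  intro f _
  simp [List.ofFn_zero, uu_nil]; omega

theorem BB_nil (a : Fin 2) (k : ℕ) (hk : 1 ≤ k) : BB a k 0 = 0 := by
  simp only [BB]
  rw [Finset.card_eq_zero, Finset.filter_eq_empty_iff]
  intro f _
  simp [List.ofFn_zero, uu_single]; omega

theorem sum_fin2 (h : Fin 2 → ℕ) (a : Fin 2) : ∑ b : Fin 2, h b = h a + h (a + 1) := by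
  fin_cases a <;> simp [Fin.sum_univ_two] <;> rw [add_comm] <;> norm_num

theorem AA_succ (k n : ℕ) : AA k (n + 1) = 2 * BB 0 k n := by
  rw [AA, card_split n (fun l => k ≤ uu l), sum_fin2 _ 0]
  show BB 0 k n + BB (0 + 1) k n = 2 * BB 0 k n
  rw [BB_flip, two_mul]

theorem BB_succ (a : Fin 2) (k n : ℕ) (hk : 1 ≤ k) :
    BB a k (n + 1) = BB a k n + AA (k - 1) n := by
  rw [BB, card_split n (fun l => k ≤ uu (a :: l)), sum_fin2 _ a]
  congr 1
  · rw [BB]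
    apply Finset.card_bij (fun g _ => g) _ (fun _ _ _ _ h => h) (fun g hg => ⟨g, by
      simp only [mem_filter, mem_univ, true_and] at hg ⊢
      rwa [uu_cons_cons, if_pos rfl], rfl⟩)
    intro g hg
    simp only [mem_filter, mem_univ, true_and] at hg ⊢
    rwa [uu_cons_cons, if_pos rfl] at hg
  · rw [AA]
    have hne : a ≠ a + 1 := by fin_cases a <;> decide
    apply Finset.card_bij (fun g _ => g) _ (fun _ _ _ _ h => h) (fun g hg => ⟨g, by
      simp only [mem_filter, mem_univ, true_and] at hg ⊢
      rw [uu_cons_cons, if_neg hne]; omega, rfl⟩)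
    intro g hg
    simp only [mem_filter, mem_univ, true_and] at hg ⊢
    rw [uu_cons_cons, if_neg hne] at hg; omega
open Finset

def ff (k n : ℕ) : ℕ := ∑ i ∈ range (n + 1 - 2*k), (k - 1 + i).choose (k-1) * 2 ^ (n - k - i)
def gg (k n : ℕ) : ℕ := ∑ i ∈ range (n + 2 - 2*k), (k - 1 + i).choose (k-1) * 2 ^ (n - k - i)

theorem ff_nil (k : ℕ) (hk : 1 ≤ k) : ff k 0 = 0 := by
  unfold ff; rw [show 0 + 1 - 2*k = 0 by omega]; simp
theorem gg_nil (k : ℕ) (hk : 1 ≤ k) : gg k 0 = 0 := by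
  unfold gg; rw [show 0 + 2 - 2*k = 0 by omega]; simp

theorem ff_succ (k n : ℕ) (hk : 1 ≤ k) : ff k (n + 1) = 2 * gg k n := by
  unfold ff gg
  rw [show n + 1 + 1 - 2*k = n + 2 - 2*k by omega, Finset.mul_sum]
  apply Finset.sum_congr rfl
  intro i hi
  simp only [mem_range] at hi
  rw [show n + 1 - k - i = (n - k - i) + 1 by omega, pow_succ]
  ring

theorem gg_succ_one (n : ℕ) : gg 1 (n + 1) = gg 1 n + 2 ^ n := by
  unfold gg
  rw [show n + 1 + 2 - 2*1 = n + 1 by omega, show n + 2 - 2*1 = n by omega,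
    Finset.sum_range_succ']
  congr 1
  · apply Finset.sum_congr rfl
    intro i hi
    simp only [mem_range] at hi
    simp only [show (1:ℕ) - 1 = 0 from rfl, Nat.choose_zero_right, one_mul]
    congr 1
    omega
  · simp

theorem gg_succ_big (m n : ℕ) : gg (m + 2) (n + 1) = gg (m + 2) n + ff (m + 1) n := by
  unfold gg ff
  rw [show n + 1 + 2 - 2*(m + 2) = n - 2*m - 1 by omega,
    show n + 2 - 2*(m + 2) = n - 2*m - 1 - 1 by omega,
    show n + 1 - 2*(m + 1) = n - 2*m - 1 by omega]
  have pascal : ∀ i ∈ range (n - 2*m - 1),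
      (m + 2 - 1 + i).choose (m + 2 - 1) * 2 ^ (n + 1 - (m + 2) - i)
        = (m + 1 - 1 + i).choose (m + 1 - 1) * 2 ^ (n - (m + 1) - i)
          + (m + i).choose (m + 1) * 2 ^ (n - m - 1 - i) := by
    intro i _
    rw [show m + 2 - 1 + i = (m + i) + 1 by omega, show m + 2 - 1 = m + 1 by omega,
      show m + 1 - 1 + i = m + i by omega, show m + 1 - 1 = m by omega,
      show n + 1 - (m + 2) - i = n - m - 1 - i by omega,
      show n - (m + 1) - i = n - m - 1 - i by omega,
      Nat.choose_succ_succ' (m + i) m, add_mul]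
  rw [Finset.sum_congr rfl pascal, Finset.sum_add_distrib, add_comm, add_right_cancel_iff]
  match hR : n - 2*m - 1 with
  | 0 => simp
  | r + 1 =>
    rw [Finset.sum_range_succ']
    simp only [Nat.choose_succ_self, zero_mul, add_zero]
    apply Finset.sum_congr rfl
    intro i hi
    rw [show m + (i + 1) = m + 2 - 1 + i by omega, show m + 1 = m + 2 - 1 from rfl,
      show n - m - 1 - (i + 1) = n - (m + 2) - i by omega]

theorem main_count (n : ℕ) : ∀ k : ℕ, 1 ≤ k → AA k n = ff k n ∧ BB 0 k n = gg k n := by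
  induction n with
  | zero =>
    intro k hk
    exact ⟨(AA_nil k hk).trans (ff_nil k hk).symm, (BB_nil 0 k hk).trans (gg_nil k hk).symm⟩
  | succ n ih =>
    intro k hk
    constructor
    · rw [AA_succ, (ih k hk).2, ff_succ k n hk]
    · rw [BB_succ 0 k n hk, (ih k hk).2]
      match k with
      | 1 => rw [gg_succ_one]; simp [AA_zero]
      | m + 2 =>
        rw [gg_succ_big]
        congr 1
        exact (ih (m + 1) (by omega)).1

/-- The number of `k`-omni binary strings of length `n ≥ 2k` is
`N(n,k,2) = ∑_{t=2k}^{n} C(t-k-1,k-1) 2^{n+k-t}`, and consequently the probability that a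
uniformly random binary string of length `n` is `k`-omni is
`P(n,k,2) = 2^{-k} ∑_{t=0}^{n-2k} C(t+k-1,k-1) 2^{-t}`. -/
theorem stmt_6 (n k : ℕ) (hk : 1 ≤ k) (hn : 2 * k ≤ n) :
    (Finset.univ.filter (fun S : Fin n → Fin 2 =>
        ∀ T : List (Fin 2), T.length = k → T.Sublist (List.ofFn S))).card
      = ∑ t ∈ Finset.Icc (2 * k) n, (t - k - 1).choose (k - 1) * 2 ^ (n + k - t) ∧
    ((Finset.univ.filter (fun S : Fin n → Fin 2 =>
        ∀ T : List (Fin 2), T.length = k → T.Sublist (List.ofFn S))).card : ℝ) / 2 ^ n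
      = (2 : ℝ)⁻¹ ^ k *
          ∑ t ∈ Finset.range (n - 2 * k + 1),
            ((t + k - 1).choose (k - 1) : ℝ) * (2 : ℝ)⁻¹ ^ t := by
  have hcard : (Finset.univ.filter (fun S : Fin n → Fin 2 =>
      ∀ T : List (Fin 2), T.length = k → T.Sublist (List.ofFn S))).card = AA k n := by
    unfold AA
    congr 1
    apply Finset.filter_congr
    intro f _
    exact omni_iff k (List.ofFn f)
  have h1 : AA k n = ff k n := (main_count n k hk).1
  have hsum : ∑ t ∈ Finset.Icc (2 * k) n, (t - k - 1).choose (k - 1) * 2 ^ (n + k - t)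
      = ff k n := by
    unfold ff
    apply Finset.sum_nbij' (fun t => t - 2*k) (fun i => 2*k + i)
    · intro a ha; simp only [mem_Icc] at ha; simp only [mem_range]; omega
    · intro a ha; simp only [mem_range] at ha; simp only [mem_Icc]; omega
    · intro a ha; simp only [mem_Icc] at ha; omega
    · intro a ha; simp only [mem_range] at ha; omega
    · intro a ha
      simp only [mem_Icc] at ha
      rw [show k - 1 + (a - 2*k) = a - k - 1 by omega,
        show n - k - (a - 2*k) = n + k - a by omega]
  constructor
  · rw [hcard, h1, hsum]
  · rw [hcard, h1]
    unfold ff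
    rw [show n + 1 - 2*k = n - 2*k + 1 by omega]
    push_cast
    rw [Finset.sum_div, Finset.mul_sum]
    apply Finset.sum_congr rfl
    intro i hi
    simp only [mem_range] at hi
    rw [show i + k - 1 = k - 1 + i by omega]
    have key : (2:ℝ)^(n - k - i) = 2^n * ((2:ℝ)⁻¹)^k * ((2:ℝ)⁻¹)^i := by
      have h4 : (2:ℝ)^n = 2^(n-k-i) * 2^k * 2^i := by
        rw [← pow_add, ← pow_add]; congr 1; omega
      rw [h4, inv_pow, inv_pow]
      field_simp
    rw [key]
    field_simp
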